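/- Let q ≥ 1 and n₁,...,n_q ≥ 0 be integers, and let A_{i,j} ∈ ℝ^m for i = 1,...,q and j = 1,...,n_i+1 be points such that the set of all their coordinates (as real numbers) is algebraically independent over ℚ. Let 0 ≤ d ≤ T ≤ m, and let Π^d be a d-dimensional affine subspace of ℝ^m that is parallel to the coordinate subspace Π^T spanned by the first T standard basis vectors (i.e., Π^d is contained in a translate of Π^T). If q ≤ d+1 and Π^d meets the affine hull of the set M_i = {A_{i,1},...,A_{i,n_i+1}} for every i = 1,...,q, then n₁ + n₂ + ... + n_q ≥ (m − T)(q − 1). -/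

import Mathlib

/-- The coordinate subspace of `ℝ^m` spanned by the first `T` standard basis vectors. -/
def coordSub (m T : ℕ) : Submodule ℝ (Fin m → ℝ) where
  carrier := {x | ∀ s : Fin m, T ≤ (s : ℕ) → x s = 0}
  add_mem' := by
    intro a b ha hb s hs
    simp [ha s hs, hb s hs]
  zero_mem' := by intro s _; rfl
  smul_mem' := by
    intro c x hx s hs
    simp [hx s hs]

open IntermediateField Polynomial
noncomputable def adjF (S : Set ℝ) : IntermediateField ℚ ℝ := IntermediateField.adjoin ℚ S

def fieldIncl {F₁ F₂ : Type*} [Field F₁] [Field F₂] [Algebra F₁ ℝ] [Algebra F₂ ℝ]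
    (K₁ : IntermediateField F₁ ℝ) (K₂ : IntermediateField F₂ ℝ)
    (h : (K₁ : Set ℝ) ⊆ (K₂ : Set ℝ)) : ↥K₁ →+* ↥K₂ where
  toFun z := ⟨z.1, h z.2⟩
  map_one' := rfl
  map_mul' _ _ := rfl
  map_zero' := rfl
  map_add' _ _ := rfl

lemma isAlg_mono {F₁ F₂ : Type*} [Field F₁] [Field F₂] [Algebra F₁ ℝ] [Algebra F₂ ℝ]
    {K₁ : IntermediateField F₁ ℝ} {K₂ : IntermediateField F₂ ℝ}
    (h : (K₁ : Set ℝ) ⊆ (K₂ : Set ℝ)) {x : ℝ} (hx : IsAlgebraic ↥K₁ x) :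
    IsAlgebraic ↥K₂ x := by
  have hf : Function.Injective (fieldIncl K₁ K₂ h) := by
    intro z w hzw
    have : (z : ℝ) = (w : ℝ) := congrArg (Subtype.val : ↥K₂ → ℝ) hzw
    exact Subtype.ext this
  have := hx.ringHom_of_comp_eq (fieldIncl K₁ K₂ h) (RingHom.id ℝ) hf (by ext z; rfl)
  simpa using this

lemma isAlg_of_mem {K : IntermediateField ℚ ℝ} {x : ℝ} (h : x ∈ K) : IsAlgebraic ↥K x :=
  isAlgebraic_algebraMap (⟨x, h⟩ : ↥K)

lemma aeval_mem {F : Type*} [Field F] [Algebra F ℝ] {K : IntermediateField F ℝ}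
    {L : IntermediateField ℚ ℝ} (hKL : (K : Set ℝ) ⊆ (L : Set ℝ)) (P : Polynomial ↥K)
    {x : ℝ} (hx : x ∈ L) : Polynomial.aeval x P ∈ L := by
  rw [Polynomial.aeval_eq_sum_range]
  refine sum_mem fun i _ => ?_
  have h1 : (P.coeff i : ℝ) ∈ L := hKL (P.coeff i).2
  have : (P.coeff i) • x ^ i = (P.coeff i : ℝ) * x ^ i := rfl
  rw [this]
  exact mul_mem h1 (pow_mem hx i)

/-- absorb: if `x` is algebraic over `adj U` and every element of `U` is algebraic
over `adj V`, then `x` is algebraic over `adj V`. -/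
lemma isAlg_absorb {U V : Set ℝ} (hU : ∀ u ∈ U, IsAlgebraic ↥(adjF V) u)
    {x : ℝ} (hx : IsAlgebraic ↥(adjF U) x) : IsAlgebraic ↥(adjF V) x := by
  set K := adjF V
  set M : IntermediateField ↥K ℝ := IntermediateField.adjoin ↥K U with hM
  have halgM : Algebra.IsAlgebraic ↥K ↥M :=
    isAlgebraic_adjoin (fun u hu => isAlgebraic_iff_isIntegral.1 (hU u hu))
  have hintM : Algebra.IsIntegral ↥K ↥M := Algebra.isAlgebraic_iff_isIntegral.1 halgM
  have hUM : (adjF U : Set ℝ) ⊆ (M : Set ℝ) := by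
    have h1 : adjF U ≤ IntermediateField.restrictScalars ℚ M := by
      rw [adjF, IntermediateField.adjoin_le_iff]
      intro u hu
      exact IntermediateField.subset_adjoin ↥K U hu
    intro z hz
    exact h1 hz
  have hxM : IsAlgebraic ↥M x := isAlg_mono hUM hx
  have : IsIntegral ↥K x := isIntegral_trans x (isAlgebraic_iff_isIntegral.1 hxM)
  exact isAlgebraic_iff_isIntegral.2 this

lemma coeff_sum_C_mul_X_pow {R : Type*} [CommRing R] (c : ℕ → R) (nn k : ℕ) :
    (∑ j ∈ Finset.range nn, Polynomial.C (c j) * Polynomial.X ^ j).coeff k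
      = if k < nn then c k else 0 := by
  rw [Polynomial.finset_sum_coeff]
  have : ∀ j ∈ Finset.range nn, (Polynomial.C (c j) * Polynomial.X ^ j).coeff k
      = if j = k then c j else 0 := by
    intro j _
    rw [Polynomial.coeff_C_mul, Polynomial.coeff_X_pow]
    by_cases h : k = j <;> simp [h, eq_comm]
  rw [Finset.sum_congr rfl this, Finset.sum_ite_eq' (Finset.range nn) k c]
  by_cases h : k < nn <;> simp [h]

lemma aeval_C_X {β : Type*} (E : MvPolynomial β ℚ) :
    MvPolynomial.aeval (fun j => (Polynomial.C (MvPolynomial.X j) :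
      Polynomial (MvPolynomial β ℚ))) E = Polynomial.C E := by
  induction E using MvPolynomial.induction_on with
  | C q => simp [MvPolynomial.aeval_C, Polynomial.algebraMap_apply]
  | add p q hp hq => simp [hp, hq]
  | mul_X p j hp => simp [hp]

lemma lemT {β : Type*} (b : β → ℝ) (a : ℝ)
    (h : AlgebraicIndependent ℚ (fun o : Option β => o.elim a b)) :
    Transcendental ↥(adjF (Set.range b)) a := by
  rintro ⟨p, hp0, hpa⟩
  set d := p.natDegree with hd
  have hrep : ∀ i : ℕ, ∃ rs : MvPolynomial β ℚ × MvPolynomial β ℚ,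
      (p.coeff i : ℝ) * MvPolynomial.aeval b rs.2 = MvPolynomial.aeval b rs.1 ∧
      MvPolynomial.aeval b rs.2 ≠ 0 := by
    intro i
    by_cases h0 : (p.coeff i : ℝ) = 0
    · exact ⟨(0, 1), by simp [h0], by simp⟩
    · have hmem : (p.coeff i : ℝ) ∈ IntermediateField.adjoin ℚ (Set.range b) := (p.coeff i).2
      rw [IntermediateField.mem_adjoin_range_iff] at hmem
      obtain ⟨r, s, hrs⟩ := hmem
      have hs : MvPolynomial.aeval b s ≠ 0 := by
        intro hs0; rw [hs0, div_zero] at hrs; exact h0 hrs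
      refine ⟨(r, s), ?_, hs⟩
      rw [hrs]; field_simp
  choose RS hRS1 hRS2 using hrep
  set E : ℕ → MvPolynomial β ℚ :=
    fun i => (RS i).1 * ∏ k ∈ (Finset.range (d+1)).erase i, (RS k).2 with hE
  have hprod : ∀ i ∈ Finset.range (d+1), MvPolynomial.aeval b (E i)
      = (p.coeff i : ℝ) * ∏ k ∈ Finset.range (d+1), MvPolynomial.aeval b ((RS k).2) := by
    intro i hi
    rw [hE]
    simp only [map_mul, map_prod]
    rw [← hRS1 i, ← Finset.mul_prod_erase (Finset.range (d+1))
      (fun k => MvPolynomial.aeval b ((RS k).2)) hi]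
    ring
  have hexp : (0:ℝ) = ∑ i ∈ Finset.range (d+1), (p.coeff i : ℝ) * a ^ i := by
    have h1 := Polynomial.aeval_eq_sum_range (p := p) a
    rw [hpa] at h1
    rw [h1]
    refine Finset.sum_congr rfl fun i _ => ?_
    rw [Algebra.smul_def]
    rfl
  have hsum : ∑ i ∈ Finset.range (d+1), MvPolynomial.aeval b (E i) * a ^ i = 0 := by
    rw [Finset.sum_congr rfl (fun i hi => by rw [hprod i hi])]
    have : ∑ i ∈ Finset.range (d+1),
        (p.coeff i : ℝ) * (∏ k ∈ Finset.range (d+1), MvPolynomial.aeval b ((RS k).2)) * a ^ i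
        = (∑ i ∈ Finset.range (d+1), (p.coeff i : ℝ) * a ^ i) *
          ∏ k ∈ Finset.range (d+1), MvPolynomial.aeval b ((RS k).2) := by
      rw [Finset.sum_mul]
      exact Finset.sum_congr rfl fun i _ => by ring
    rw [this, ← hexp, zero_mul]
  -- build the MvPolynomial over Option β
  set Q : MvPolynomial (Option β) ℚ := ∑ i ∈ Finset.range (d+1),
    MvPolynomial.rename Option.some (E i) * MvPolynomial.X none ^ i with hQ
  have hQeval : MvPolynomial.aeval (fun o : Option β => o.elim a b) Q = 0 := by
    rw [hQ, map_sum]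
    rw [← hsum]
    refine Finset.sum_congr rfl fun i _ => ?_
    rw [map_mul, map_pow, MvPolynomial.aeval_rename, MvPolynomial.aeval_X]
    rfl
  have hQ0 : Q = 0 := h.eq_zero_of_aeval_eq_zero Q hQeval
  -- apply Ψ
  set Ψ : MvPolynomial (Option β) ℚ →ₐ[ℚ] Polynomial (MvPolynomial β ℚ) :=
    MvPolynomial.aeval (fun o : Option β =>
      o.elim Polynomial.X (fun j => Polynomial.C (MvPolynomial.X j))) with hΨ
  have hΨQ : Ψ Q = ∑ i ∈ Finset.range (d+1), Polynomial.C (E i) * Polynomial.X ^ i := by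
    rw [hQ, map_sum]
    refine Finset.sum_congr rfl fun i _ => ?_
    rw [map_mul, map_pow, hΨ, MvPolynomial.aeval_rename, MvPolynomial.aeval_X]
    have : ((fun o : Option β => o.elim Polynomial.X
        (fun j => Polynomial.C (MvPolynomial.X j))) ∘ Option.some)
        = fun j => (Polynomial.C (MvPolynomial.X j) : Polynomial (MvPolynomial β ℚ)) := rfl
    rw [this, aeval_C_X]
    rfl
  have hE0 : E d = 0 := by
    have h2 : (0 : Polynomial (MvPolynomial β ℚ))
        = ∑ i ∈ Finset.range (d+1), Polynomial.C (E i) * Polynomial.X ^ i := by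
      rw [← hΨQ, hQ0, map_zero]
    have h3 := congrArg (fun P => Polynomial.coeff P d) h2
    simpa [coeff_sum_C_mul_X_pow] using h3.symm
  have hcd : (p.coeff d : ℝ) ≠ 0 := by
    have : p.coeff d ≠ 0 := by
      rw [hd]; exact Polynomial.leadingCoeff_ne_zero.2 hp0
    exact fun hc => this (Subtype.ext hc)
  have := hprod d (Finset.self_mem_range_succ d)
  rw [hE0, map_zero] at this
  have hprodne : (∏ k ∈ Finset.range (d+1), MvPolynomial.aeval b ((RS k).2)) ≠ 0 :=
    Finset.prod_ne_zero_iff.2 fun k _ => hRS2 k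
  exact (mul_ne_zero hcd hprodne) this.symm

lemma exchangeLem {S : Set ℝ} {g x : ℝ}
    (h1 : IsAlgebraic ↥(adjF (S ∪ {g})) x)
    (h2 : ¬ IsAlgebraic ↥(adjF S) x) :
    IsAlgebraic ↥(adjF (S ∪ {x})) g := by
  classical
  -- every element of adjF (S ∪ {g}) is a ratio of polynomials in g over adjF S
  have hle : (adjF (S ∪ {g}) : Set ℝ) ⊆
      ((IntermediateField.adjoin ↥(adjF S) {g} : IntermediateField ↥(adjF S) ℝ) : Set ℝ) := by
    have : adjF (S ∪ {g}) ≤ IntermediateField.restrictScalars ℚ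
        (IntermediateField.adjoin ↥(adjF S) {g}) := by
      rw [adjF, IntermediateField.adjoin_le_iff]
      rintro z (hz | hz)
      · rw [SetLike.mem_coe, IntermediateField.mem_restrictScalars]
        have hzF : z ∈ adjF S := IntermediateField.subset_adjoin ℚ S hz
        exact (IntermediateField.adjoin ↥(adjF S) {g}).algebraMap_mem ⟨z, hzF⟩
      · rw [Set.mem_singleton_iff] at hz
        subst hz
        rw [SetLike.mem_coe, IntermediateField.mem_restrictScalars]
        exact IntermediateField.subset_adjoin _ _ rfl
    exact fun z hz => this hz
  have hz : ∀ z : ℝ, z ∈ adjF (S ∪ {g}) →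
      ∃ ND : Polynomial ↥(adjF S) × Polynomial ↥(adjF S),
        z * Polynomial.aeval g ND.2 = Polynomial.aeval g ND.1 ∧
        Polynomial.aeval g ND.2 ≠ 0 := by
    intro z hzmem
    by_cases h0 : z = 0
    · exact ⟨(0, 1), by simp [h0], by simp⟩
    · have hzg : z ∈ IntermediateField.adjoin ↥(adjF S) {g} := hle hzmem
      rw [IntermediateField.mem_adjoin_simple_iff] at hzg
      obtain ⟨r, s, hrs⟩ := hzg
      have hs : Polynomial.aeval g s ≠ 0 := by
        intro hs0; rw [hs0, div_zero] at hrs; exact h0 hrs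
      refine ⟨(r, s), ?_, hs⟩
      rw [hrs]; field_simp
  obtain ⟨p, hp0, hpa⟩ := h1
  set d := p.natDegree with hd
  have hrep : ∀ i : ℕ, ∃ ND : Polynomial ↥(adjF S) × Polynomial ↥(adjF S),
      (p.coeff i : ℝ) * Polynomial.aeval g ND.2 = Polynomial.aeval g ND.1 ∧
      Polynomial.aeval g ND.2 ≠ 0 := fun i => hz _ (p.coeff i).2
  choose ND hND1 hND2 using hrep
  set E : ℕ → Polynomial ↥(adjF S) :=
    fun i => (ND i).1 * ∏ k ∈ (Finset.range (d+1)).erase i, (ND k).2 with hE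
  have hprod : ∀ i ∈ Finset.range (d+1), Polynomial.aeval g (E i)
      = (p.coeff i : ℝ) * ∏ k ∈ Finset.range (d+1), Polynomial.aeval g ((ND k).2) := by
    intro i hi
    rw [hE]
    simp only [map_mul, map_prod]
    rw [← hND1 i, ← Finset.mul_prod_erase (Finset.range (d+1))
      (fun k => Polynomial.aeval g ((ND k).2)) hi]
    ring
  have hexp : (0:ℝ) = ∑ i ∈ Finset.range (d+1), (p.coeff i : ℝ) * x ^ i := by
    have hh := Polynomial.aeval_eq_sum_range (p := p) x
    rw [hpa] at hh
    rw [hh]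
    refine Finset.sum_congr rfl fun i _ => ?_
    rw [Algebra.smul_def]
    rfl
  have hsum : ∑ i ∈ Finset.range (d+1), Polynomial.aeval g (E i) * x ^ i = 0 := by
    rw [Finset.sum_congr rfl (fun i hi => by rw [hprod i hi])]
    have : ∑ i ∈ Finset.range (d+1),
        (p.coeff i : ℝ) * (∏ k ∈ Finset.range (d+1), Polynomial.aeval g ((ND k).2)) * x ^ i
        = (∑ i ∈ Finset.range (d+1), (p.coeff i : ℝ) * x ^ i) *
          ∏ k ∈ Finset.range (d+1), Polynomial.aeval g ((ND k).2) := by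
      rw [Finset.sum_mul]
      exact Finset.sum_congr rfl fun i _ => by ring
    rw [this, ← hexp, zero_mul]
  have hcd : (p.coeff d : ℝ) ≠ 0 := by
    have : p.coeff d ≠ 0 := by
      rw [hd]; exact Polynomial.leadingCoeff_ne_zero.2 hp0
    exact fun hc => this (Subtype.ext hc)
  have hEd : Polynomial.aeval g (E d) ≠ 0 := by
    rw [hprod d (Finset.self_mem_range_succ d)]
    exact mul_ne_zero hcd (Finset.prod_ne_zero_iff.2 fun k _ => hND2 k)
  set Dd := (Finset.range (d+1)).sup (fun j => (E j).natDegree) with hDd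
  set Fm : ℕ → Polynomial ↥(adjF S) :=
    fun i => ∑ j ∈ Finset.range (d+1), Polynomial.C ((E j).coeff i) * Polynomial.X ^ j with hFm
  have hFmval : ∀ i, Polynomial.aeval x (Fm i)
      = ∑ j ∈ Finset.range (d+1), ((E j).coeff i : ℝ) * x ^ j := by
    intro i
    rw [hFm]
    simp only [map_sum, map_mul, map_pow, Polynomial.aeval_C, Polynomial.aeval_X]
    rfl
  have hswap : ∑ i ∈ Finset.range (Dd+1), Polynomial.aeval x (Fm i) * g ^ i = 0 := by
    have hEexp : ∀ j ∈ Finset.range (d+1), Polynomial.aeval g (E j)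
        = ∑ i ∈ Finset.range (Dd+1), ((E j).coeff i : ℝ) * g ^ i := by
      intro j hj
      rw [Polynomial.aeval_eq_sum_range' (Nat.lt_succ_of_le (Finset.le_sup (f := fun j => (E j).natDegree) hj)) g]
      refine Finset.sum_congr rfl fun i _ => ?_
      rw [Algebra.smul_def]
      rfl
    calc ∑ i ∈ Finset.range (Dd+1), Polynomial.aeval x (Fm i) * g ^ i
        = ∑ i ∈ Finset.range (Dd+1), ∑ j ∈ Finset.range (d+1),
            ((E j).coeff i : ℝ) * x ^ j * g ^ i := by
          refine Finset.sum_congr rfl fun i _ => ?_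
          rw [hFmval i, Finset.sum_mul]
      _ = ∑ j ∈ Finset.range (d+1), ∑ i ∈ Finset.range (Dd+1),
            ((E j).coeff i : ℝ) * x ^ j * g ^ i := Finset.sum_comm
      _ = ∑ j ∈ Finset.range (d+1), Polynomial.aeval g (E j) * x ^ j := by
          refine Finset.sum_congr rfl fun j hj => ?_
          rw [hEexp j hj, Finset.sum_mul]
          exact Finset.sum_congr rfl fun i _ => by ring
      _ = 0 := hsum
  by_cases hall : ∀ i ∈ Finset.range (Dd+1), Polynomial.aeval x (Fm i) = 0
  · exfalso
    have hFm0 : ∀ i ∈ Finset.range (Dd+1), Fm i = 0 := by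
      intro i hi
      by_contra hne
      exact h2 ⟨Fm i, hne, hall i hi⟩
    have hEd0 : E d = 0 := by
      ext i
      by_cases hiD : i < Dd + 1
      · have := congrArg (fun P => Polynomial.coeff P d) (hFm0 i (Finset.mem_range.2 hiD))
        simp only [hFm] at this
        rw [coeff_sum_C_mul_X_pow] at this
        simpa [Nat.lt_succ_self] using this
      · push_neg at hiD
        rw [Polynomial.coeff_eq_zero_of_natDegree_lt, Polynomial.coeff_zero]
        calc (E d).natDegree ≤ Dd := Finset.le_sup (f := fun j => (E j).natDegree) (Finset.self_mem_range_succ d)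
          _ < i := hiD
    exact hEd (by rw [hEd0, map_zero])
  · push_neg at hall
    obtain ⟨i0, hi0m, hi0⟩ := hall
    have hSL : ((adjF S : IntermediateField ℚ ℝ) : Set ℝ) ⊆ (adjF (S ∪ {x}) : Set ℝ) := by
      intro z hzm
      exact IntermediateField.adjoin.mono ℚ S (S ∪ {x}) Set.subset_union_left hzm
    have hxmem : x ∈ adjF (S ∪ {x}) :=
      IntermediateField.subset_adjoin ℚ _ (Set.mem_union_right S rfl)
    have hmem : ∀ i, Polynomial.aeval x (Fm i) ∈ adjF (S ∪ {x}) :=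
      fun i => aeval_mem hSL (Fm i) hxmem
    refine ⟨∑ i ∈ Finset.range (Dd+1),
      Polynomial.C (⟨Polynomial.aeval x (Fm i), hmem i⟩ : ↥(adjF (S ∪ {x})))
        * Polynomial.X ^ i, ?_, ?_⟩
    · intro hq
      have := congrArg (fun P => Polynomial.coeff P i0) hq
      rw [coeff_sum_C_mul_X_pow] at this
      rw [if_pos (Finset.mem_range.1 hi0m), Polynomial.coeff_zero] at this
      exact hi0 (congrArg Subtype.val this)
    · rw [map_sum, ← hswap]
      refine Finset.sum_congr rfl fun i _ => ?_
      rw [map_mul, map_pow, Polynomial.aeval_C, Polynomial.aeval_X]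
      rfl

lemma indep_option {β : Type} {n : ℕ} {b : β → ℝ} {y : Fin n → ℝ}
    (h : AlgebraicIndependent ℚ (Sum.elim b y)) (k0 : Fin n) :
    AlgebraicIndependent ℚ (fun o : Option β => o.elim (y k0) b) := by
  have hf : Function.Injective (fun o : Option β => o.elim (Sum.inr k0 : β ⊕ Fin n) Sum.inl) := by
    intro o1 o2 h12
    cases o1 <;> cases o2 <;> simp_all
  have h2 := h.comp _ hf
  convert h2 using 1
  funext o; cases o <;> rfl

lemma keyLemma (t : ℕ) {β : Type} (b : β → ℝ) (y : Fin (t+1) → ℝ)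
    (hind : AlgebraicIndependent ℚ (Sum.elim b y)) (G : Finset ℝ) (hG : G.card ≤ t)
    (halg : ∀ k, IsAlgebraic ↥(adjF (Set.range b ∪ ↑G)) (y k)) : False := by
  classical
  induction t generalizing β G with
  | zero =>
    have hG0 : G = ∅ := Finset.card_eq_zero.1 (Nat.le_zero.1 hG)
    subst hG0
    refine lemT b (y 0) (indep_option hind 0) ?_
    refine isAlg_mono (fun z hz => IntermediateField.adjoin.mono ℚ _ _ ?_ hz) (halg 0)
    simp
  | succ t ih =>
    set a := y 0 with ha
    have htra : Transcendental ↥(adjF (Set.range b)) a := lemT b a (indep_option hind 0)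
    set 𝒮 : Finset (Finset ℝ) :=
      G.powerset.filter (fun H => IsAlgebraic ↥(adjF (Set.range b ∪ ↑H)) a) with h𝒮
    have hGin : G ∈ 𝒮 := Finset.mem_filter.2 ⟨Finset.mem_powerset_self G, halg 0⟩
    obtain ⟨H, hH, hmin⟩ := Finset.exists_min_image 𝒮 Finset.card ⟨G, hGin⟩
    have hHsub : H ⊆ G := Finset.mem_powerset.1 (Finset.mem_filter.1 hH).1
    have hHalg : IsAlgebraic ↥(adjF (Set.range b ∪ ↑H)) a := (Finset.mem_filter.1 hH).2
    have hHne : H.Nonempty := by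
      rcases H.eq_empty_or_nonempty with h0 | hne
      · refine absurd (isAlg_mono (fun z hz =>
          IntermediateField.adjoin.mono ℚ _ _ ?_ hz) hHalg) htra
        simp [h0]
      · exact hne
    obtain ⟨g, hg⟩ := hHne
    have hH'a : ¬ IsAlgebraic ↥(adjF (Set.range b ∪ ↑(H.erase g))) a := by
      intro hc
      have hH'S : H.erase g ∈ 𝒮 := Finset.mem_filter.2
        ⟨Finset.mem_powerset.2 ((Finset.erase_subset g H).trans hHsub), hc⟩
      have h1 := hmin (H.erase g) hH'S
      have h2 : (H.erase g).card < H.card := Finset.card_erase_lt_of_mem hg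
      omega
    have huni : Set.range b ∪ ↑H = (Set.range b ∪ ↑(H.erase g)) ∪ {g} := by
      ext z
      by_cases hzg : z = g
      · subst hzg
        simp [hg]
      · simp only [Set.mem_union, Finset.coe_erase, Set.mem_diff,
          Set.mem_singleton_iff, Finset.mem_coe, hzg, or_false]
        tauto
    have hexch : IsAlgebraic ↥(adjF ((Set.range b ∪ ↑(H.erase g)) ∪ {a})) g :=
      exchangeLem (by rw [← huni]; exact hHalg) hH'a
    set b' : Option β → ℝ := fun o => o.elim a b with hb'
    set y' : Fin (t+1) → ℝ := fun k => y k.succ with hy'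
    have hind' : AlgebraicIndependent ℚ (Sum.elim b' y') := by
      have hf : Function.Injective (Sum.elim
          (fun o : Option β => o.elim (Sum.inr 0 : β ⊕ Fin (t+2)) Sum.inl)
          (fun k : Fin (t+1) => (Sum.inr k.succ : β ⊕ Fin (t+2)))) := by
        rintro (o1 | k1) (o2 | k2) h12
        · cases o1 <;> cases o2 <;> simp_all
        · cases o1 <;> simp_all [Fin.succ_ne_zero, (Fin.succ_ne_zero k2).symm]
        · cases o2 <;> simp_all [Fin.succ_ne_zero]
        · simp_all [Fin.succ_inj]
      have h2 := hind.comp _ hf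
      convert h2 using 1
      funext o
      rcases o with (o | k)
      · cases o <;> rfl
      · rfl
    have hgG : g ∈ G := hHsub hg
    have hG' : (G.erase g).card ≤ t := by
      rw [Finset.card_erase_of_mem hgG]
      omega
    refine ih b' y' hind' (G.erase g) hG' ?_
    intro k
    have hsub : (Set.range b ∪ ↑(H.erase g)) ∪ {a} ⊆ Set.range b' ∪ ↑(G.erase g) := by
      rintro z ((hz | hz) | hz)
      · obtain ⟨w, rfl⟩ := hz
        exact Set.mem_union_left _ ⟨some w, rfl⟩
      · exact Set.mem_union_right _ (Finset.coe_subset.2 (Finset.erase_subset_erase g hHsub) hz)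
      · rw [Set.mem_singleton_iff] at hz
        subst hz
        exact Set.mem_union_left _ ⟨none, rfl⟩
    refine isAlg_absorb ?_ (halg k.succ)
    rintro u (hu | hu)
    · obtain ⟨w, rfl⟩ := hu
      exact isAlg_of_mem (IntermediateField.subset_adjoin _ _ (Set.mem_union_left _ ⟨some w, rfl⟩))
    · by_cases hug : u = g
      · subst hug
        exact isAlg_mono (fun z hz => IntermediateField.adjoin.mono ℚ _ _ hsub hz) hexch
      · refine isAlg_of_mem (IntermediateField.subset_adjoin _ _ ?_)
        exact Set.mem_union_right _ (Finset.mem_coe.2 (Finset.mem_erase.2 ⟨hug, hu⟩))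

/-- Case I (q ≤ d+1) of Theorem 1.1: if the coordinates of the points `A i j` are
algebraically independent over `ℚ`, `P` is a `d`-plane parallel to the coordinate
subspace `Π^T`, `q ≤ d + 1`, and `P` meets the affine hull of each set
`M_i = {A i 1, …, A i (n_i+1)}`, then `n₁ + ⋯ + n_q ≥ (m − T)(q − 1)`. -/
theorem stmt1 (m q d T : ℕ) (hq : 1 ≤ q) (n : Fin q → ℕ)
    (A : ∀ i : Fin q, Fin (n i + 1) → (Fin m → ℝ))
    (hA : AlgebraicIndependent ℚ
      (fun p : Σ i : Fin q, Fin (n i + 1) × Fin m => A p.1 p.2.1 p.2.2))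
    (hdT : d ≤ T) (hTm : T ≤ m)
    (P : AffineSubspace ℝ (Fin m → ℝ))
    (hne : (P : Set (Fin m → ℝ)).Nonempty)
    (hdim : Module.finrank ℝ P.direction = d)
    (hpar : P.direction ≤ coordSub m T)
    (hqd : q ≤ d + 1)
    (hmeet : ∀ i, ((P : Set (Fin m → ℝ)) ∩
      (affineSpan ℝ (Set.range (A i)) : Set (Fin m → ℝ))).Nonempty) :
    ((m : ℤ) - T) * ((q : ℤ) - 1) ≤ ∑ i, (n i : ℤ) := by
  classical
  haveI : NeZero q := ⟨by omega⟩
  by_contra hcon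
  push_neg at hcon
  -- points and weights
  choose x hx using hmeet
  have hxP : ∀ i, x i ∈ P := fun i => (hx i).1
  have hxA : ∀ i, x i ∈ affineSpan ℝ (Set.range (A i)) := fun i => (hx i).2
  choose w hw1 hw2 using fun i => eq_affineCombination_of_mem_affineSpan_of_fintype (hxA i)
  have hxc : ∀ i (s : Fin m), x i s = ∑ j, w i j * A i j s := by
    intro i s
    rw [hw2 i, Finset.affineCombination_eq_linear_combination _ _ _ (hw1 i)]
    simp [Finset.sum_apply]
  -- tails agree
  have htail : ∀ (i : Fin q) (s : Fin m), T ≤ (s : ℕ) →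
      (∑ j, w i j * A i j s) = ∑ j, w 0 j * A 0 j s := by
    intro i s hs
    have hd : x i - x 0 ∈ P.direction := by
      have h1 := AffineSubspace.vsub_mem_direction (hxP i) (hxP 0)
      simpa [vsub_eq_sub] using h1
    have h0 : (x i - x 0) s = 0 := hpar hd s hs
    have h2 : x i s - x 0 s = 0 := by simpa using h0
    rw [← hxc i s, ← hxc 0 s]
    linarith
  -- nonzero weights
  have hjw : ∀ i, ∃ j, w i j ≠ 0 := by
    intro i
    by_contra hc
    push_neg at hc
    have : (1:ℝ) = 0 := by rw [← hw1 i]; simp [hc]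
    norm_num at this
  choose jj hjj using hjw
  -- index bookkeeping
  set Idx := (Σ i : Fin q, Fin (n i + 1) × Fin m) with hIdx
  set Qp : Idx → Prop := fun p => p.1 ≠ 0 ∧ p.2.1 = jj p.1 ∧ T ≤ (p.2.2 : ℕ) with hQp
  set β := {p : Idx // ¬ Qp p} with hβ
  set b : β → ℝ := fun p => A p.1.1 p.1.2.1 p.1.2.2 with hb
  set ιY := ({i : Fin q // i ≠ 0} × {s : Fin m // T ≤ (s : ℕ)}) with hιY
  set yY : ιY → ℝ := fun z => A z.1.1 (jj z.1.1) z.2.1 with hyY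
  set G : Finset ℝ := ((Finset.univ : Finset (Fin q)).sigma
    (fun i => (Finset.univ : Finset (Fin (n i + 1))).erase (jj i))).image
      (fun p => w p.1 p.2) with hG
  have hGcard : G.card ≤ ∑ i, n i := by
    refine Finset.card_image_le.trans (le_of_eq ?_)
    rw [Finset.card_sigma]
    refine Finset.sum_congr rfl fun i _ => ?_
    rw [Finset.card_erase_of_mem (Finset.mem_univ _), Finset.card_univ, Fintype.card_fin]
    omega
  -- memberships
  have hbK : ∀ (p : Idx), ¬ Qp p → A p.1 p.2.1 p.2.2 ∈ adjF (Set.range b ∪ ↑G) := by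
    intro p hp
    exact IntermediateField.subset_adjoin _ _ (Set.mem_union_left _ ⟨⟨p, hp⟩, rfl⟩)
  have hwG : ∀ (i : Fin q) (j : Fin (n i + 1)), j ≠ jj i → w i j ∈ adjF (Set.range b ∪ ↑G) := by
    intro i j hj
    refine IntermediateField.subset_adjoin _ _ (Set.mem_union_right _ ?_)
    refine Finset.mem_coe.2 (Finset.mem_image.2 ⟨⟨i, j⟩, ?_, rfl⟩)
    exact Finset.mem_sigma.2 ⟨Finset.mem_univ _, Finset.mem_erase.2 ⟨hj, Finset.mem_univ _⟩⟩
  have hwK : ∀ (i : Fin q) (j : Fin (n i + 1)), w i j ∈ adjF (Set.range b ∪ ↑G) := by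
    intro i j
    by_cases hj : j = jj i
    · have hsum : w i (jj i) + ∑ j' ∈ Finset.univ.erase (jj i), w i j' = 1 := by
        rw [Finset.add_sum_erase _ _ (Finset.mem_univ (jj i))]
        exact hw1 i
      have heq2 : w i j = 1 - ∑ j' ∈ Finset.univ.erase (jj i), w i j' := by
        rw [hj]; linarith
      rw [heq2]
      refine sub_mem (one_mem _) (sum_mem fun j' hj' => ?_)
      exact hwG i j' (Finset.mem_erase.1 hj').1
    · exact hwG i j hj
  have hyK : ∀ z : ιY, yY z ∈ adjF (Set.range b ∪ ↑G) := by
    rintro ⟨⟨i, hi0⟩, ⟨s, hs⟩⟩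
    have heq := htail i s hs
    have hsplit : w i (jj i) * A i (jj i) s
        + ∑ j ∈ Finset.univ.erase (jj i), w i j * A i j s = ∑ j, w i j * A i j s :=
      Finset.add_sum_erase _ (fun j => w i j * A i j s) (Finset.mem_univ _)
    have hsolve : A i (jj i) s = ((∑ j, w 0 j * A 0 j s)
        - ∑ j ∈ Finset.univ.erase (jj i), w i j * A i j s) * (w i (jj i))⁻¹ := by
      rw [← heq, ← hsplit]
      field_simp [hjj i]
      ring
    show A i (jj i) s ∈ _
    rw [hsolve]
    refine mul_mem (sub_mem (sum_mem fun j _ => ?_) (sum_mem fun j hjm => ?_))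
      (inv_mem (hwK i (jj i)))
    · refine mul_mem (hwK 0 j) (hbK ⟨0, (j, s)⟩ ?_)
      simp [hQp]
    · refine mul_mem (hwK i j) (hbK ⟨i, (j, s)⟩ ?_)
      intro hQ
      exact (Finset.mem_erase.1 hjm).1 hQ.2.1
  -- combined algebraic independence
  have hfinj : Function.Injective (Sum.elim (Subtype.val : β → Idx)
      (fun z : ιY => (⟨z.1.1, (jj z.1.1, z.2.1)⟩ : Idx))) := by
    rintro (p1 | z1) (p2 | z2) h
    · exact congrArg Sum.inl (Subtype.ext h)
    · exfalso
      simp only [Sum.elim_inl, Sum.elim_inr] at h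
      have h2 : Qp ⟨z2.1.1, (jj z2.1.1, z2.2.1)⟩ := ⟨z2.1.2, rfl, z2.2.2⟩
      rw [← h] at h2
      exact p1.2 h2
    · exfalso
      simp only [Sum.elim_inl, Sum.elim_inr] at h
      have h2 : Qp ⟨z1.1.1, (jj z1.1.1, z1.2.1)⟩ := ⟨z1.1.2, rfl, z1.2.2⟩
      rw [h] at h2
      exact p2.2 h2
    · simp only [Sum.elim_inr] at h
      obtain ⟨⟨i1, hi1⟩, ⟨s1, hs1⟩⟩ := z1
      obtain ⟨⟨i2, hi2⟩, ⟨s2, hs2⟩⟩ := z2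
      simp only at h
      have hi : i1 = i2 := congrArg Sigma.fst h
      subst hi
      have h2 : (jj i1, s1) = (jj i1, s2) := by
        have := Sigma.mk.inj_iff.1 h
        exact eq_of_heq this.2
      have hs : s1 = s2 := congrArg Prod.snd h2
      subst hs
      rfl
  have hind0 : AlgebraicIndependent ℚ (Sum.elim b yY) := by
    have h1 := hA.comp _ hfinj
    convert h1 using 1
    funext z
    rcases z with p | z
    · rfl
    · rfl
  -- cardinalities
  have hcard1 : Fintype.card {i : Fin q // i ≠ 0} = q - 1 := by
    rw [Fintype.card_subtype_compl, Fintype.card_fin, Fintype.card_subtype_eq]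
  have hcard2 : Fintype.card {s : Fin m // T ≤ (s : ℕ)} = m - T := by
    refine Fintype.card_congr ⟨fun z => (⟨(z.1 : ℕ) - T, by omega⟩ : Fin (m - T)),
      fun k => ⟨⟨(k : ℕ) + T, by omega⟩, by simp⟩, ?_, ?_⟩ |>.trans (Fintype.card_fin _)
    · rintro ⟨⟨sv, hsv⟩, hTs⟩
      simp only [Fin.val_mk] at hTs ⊢
      apply Subtype.ext
      apply Fin.ext
      simp only [Fin.val_mk]
      omega
    · rintro ⟨kv, hkv⟩
      apply Fin.ext
      simp only [Fin.val_mk]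
      omega
  have hcardY : Fintype.card ιY = (q - 1) * (m - T) := by
    show Fintype.card ({i : Fin q // i ≠ 0} × {s : Fin m // T ≤ (s : ℕ)}) = _
    rw [Fintype.card_prod, hcard1, hcard2]
  -- numeric contradiction setup
  have hnat : (∑ i, n i) + 1 ≤ (q - 1) * (m - T) := by
    have h1 : ((∑ i, n i : ℕ) : ℤ) < (((m - T) * (q - 1) : ℕ) : ℤ) := by
      push_cast [Nat.cast_sub hTm, Nat.cast_sub hq]
      exact hcon
    have h2 : (∑ i, n i) < (m - T) * (q - 1) := by exact_mod_cast h1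
    calc (∑ i, n i) + 1 ≤ (m - T) * (q - 1) := h2
      _ = (q - 1) * (m - T) := Nat.mul_comm _ _
  obtain ⟨e⟩ := Function.Embedding.nonempty_of_card_le
    (α := Fin ((∑ i, n i) + 1)) (β := ιY) (by rw [Fintype.card_fin, hcardY]; exact hnat)
  have hinde : AlgebraicIndependent ℚ (Sum.elim b (fun k => yY (e k))) := by
    have hinj : Function.Injective (Sum.map (id : β → β) e) :=
      Function.Injective.sumMap Function.injective_id e.injective
    have h1 := hind0.comp _ hinj
    convert h1 using 1
    funext z
    rcases z with p | k
    · rfl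
    · rfl
  exact keyLemma (∑ i, n i) b (fun k => yY (e k)) hinde G hGcard
    (fun k => isAlg_of_mem (hyK (e k)))
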